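/- For every real number θ with 1/2 ≤ θ ≤ 3/2 and all real numbers a, b, c, the implicit approximation χ_θ = [θ(5/2 − θ) − 1/2]·a + 2(1−θ)²·b + (θ − 1/2)(1−θ)·c satisfies the inequality χ_θ · [(θ + 1/2)a − 2θb + (θ − 1/2)c] ≥ (1/2)(3/2 − θ)·(a² − b²) + (1/2)(θ − 1/2)·((2a − b)² − (2b − c)²). -/
import Mathlib

theorem product_inequality_implicit_approximation (θ a b c : ℝ)
    (hθ1 : 1/2 ≤ θ) (hθ2 : θ ≤ 3/2) :
    ((θ * (5/2 - θ) - 1/2) * a + 2 * (1 - θ)^2 * b + (θ - 1/2) * (1 - θ) * c) *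
      ((θ + 1/2) * a - 2 * θ * b + (θ - 1/2) * c)
    ≥ (1/2) * (3/2 - θ) * (a^2 - b^2)
      + (1/2) * (θ - 1/2) * ((2*a - b)^2 - (2*b - c)^2) := by
  nlinarith [mul_nonneg (mul_nonneg (by linarith : (0:ℝ) ≤ θ) (by linarith : (0:ℝ) ≤ θ - 1/2)) (by linarith : (0:ℝ) ≤ 3 - 2*θ), sq_nonneg (a - 2*b + c), mul_nonneg (mul_nonneg (mul_nonneg (by linarith : (0:ℝ) ≤ θ) (by linarith : (0:ℝ) ≤ θ - 1/2)) (by linarith : (0:ℝ) ≤ 3 - 2*θ)) (sq_nonneg (a - 2*b + c))]
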